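/- Let (W,S) be a Coxeter system and v ∈ W. Then P^v = Σ_{u ≤ v} (−1)^{ℓ(u)} P̄^u in End(V_W), where P̄^u = (id − P^{{s₁}})⋯(id − P^{{s_k}}) for a reduced expression s₁⋯s_k of u. -/
import Mathlib


open CoxeterSystem

variable {B W : Type*} [Group W] {M : CoxeterMatrix B}

/-- The projection `P^{{s}}` onto `W^{{s}}`: removes a trailing `s` if that shortens `w`. -/
noncomputable def CoxeterSystem.projSimple (cs : CoxeterSystem M W) (s : B) (w : W) : W :=
  if cs.length (w * cs.simple s) < cs.length w then w * cs.simple s else w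

/-- For a word `ω = s₁ ⋯ s_k`, the composition `P^{{s₁}} ∘ ⋯ ∘ P^{{s_k}}`. -/
noncomputable def CoxeterSystem.projWord (cs : CoxeterSystem M W) (ω : List B) : W → W :=
  ω.foldr (fun s g => cs.projSimple s ∘ g) id

/-- The Bruhat order, via the subword property: `u ≤ v` iff some reduced word for `v`
has a subword whose product is `u`. -/
def CoxeterSystem.bruhatLE (cs : CoxeterSystem M W) (u v : W) : Prop :=
  ∃ ω : List B, cs.IsReduced ω ∧ cs.wordProd ω = v ∧
    ∃ ω' : List B, ω'.Sublist ω ∧ cs.wordProd ω' = u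

/-- The linearized projection `P^{{s}}` on the free `ℤ`-module on `W`. -/
noncomputable def CoxeterSystem.projS (cs : CoxeterSystem M W) (s : B) :
    Module.End ℤ (W →₀ ℤ) :=
  Finsupp.lmapDomain ℤ ℤ (cs.projSimple s)

/-- For a word `ω = s₁ ⋯ s_k`, the endomorphism `(id − P^{{s₁}}) ⋯ (id − P^{{s_k}})`. -/
noncomputable def CoxeterSystem.projBarWord (cs : CoxeterSystem M W) (ω : List B) :
    Module.End ℤ (W →₀ ℤ) :=
  ω.foldr (fun s g => (1 - cs.projS s) * g) 1


namespace BruhatAux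
open List

set_option linter.unusedSectionVars false

@[ext]
structure NN (G : Type*) where
  fn : G → ZMod 2
  el : G

variable {G : Type*} [Group G]

instance : Mul (NN G) :=
  ⟨fun a b => ⟨a.fn + fun t => b.fn (a.el⁻¹ * t * a.el), a.el * b.el⟩⟩
instance : One (NN G) := ⟨⟨0, 1⟩⟩
instance : Inv (NN G) := ⟨fun a => ⟨fun t => a.fn (a.el * t * a.el⁻¹), a.el⁻¹⟩⟩

lemma mul_fn (a b : NN G) (t : G) : (a * b).fn t = a.fn t + b.fn (a.el⁻¹ * t * a.el) := rfl
@[simp] lemma mul_el (a b : NN G) : (a * b).el = a.el * b.el := rfl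
lemma one_fn (t : G) : (1 : NN G).fn t = 0 := rfl
@[simp] lemma one_el : (1 : NN G).el = 1 := rfl
lemma inv_fn (a : NN G) (t : G) : (a⁻¹).fn t = a.fn (a.el * t * a.el⁻¹) := rfl
@[simp] lemma inv_el (a : NN G) : (a⁻¹).el = a.el⁻¹ := rfl

lemma zmod2_add_self (a : ZMod 2) : a + a = 0 := by revert a; decide

instance : Group (NN G) :=
  Group.ofLeftAxioms
    (fun a b c => by
      ext t
      · simp only [mul_fn, mul_el, mul_inv_rev, mul_assoc, add_assoc]
      · simp [mul_assoc])
    (fun a => by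
      ext t
      · simp only [mul_fn, one_fn, one_el, inv_one, one_mul, mul_one, zero_add]
      · simp)
    (fun a => by
      ext t
      · simp only [mul_fn, inv_fn, inv_el, inv_inv, one_fn]
        exact zmod2_add_self _
      · simp)

lemma pow_el (a : NN G) (n : ℕ) : (a ^ n).el = a.el ^ n := by
  induction n with
  | zero => simp
  | succ n ih => rw [pow_succ, pow_succ, mul_el, ih]

lemma pow_fn (a : NN G) (n : ℕ) (t : G) :
    (a ^ n).fn t = ∑ k ∈ Finset.range n, a.fn ((a.el ^ k)⁻¹ * t * a.el ^ k) := by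
  induction n with
  | zero => simp [one_fn]
  | succ n ih =>
      rw [pow_succ, mul_fn, ih, pow_el, Finset.sum_range_succ]


section Phi

open scoped Classical

variable (cs : CoxeterSystem M W)

local prefix:100 "s" => cs.simple
local prefix:100 "π" => cs.wordProd
local prefix:100 "ℓ" => cs.length

/-- The generators of the cocycle group. -/
noncomputable def gens (i : B) : NN W := ⟨fun t => if t = s i then 1 else 0, s i⟩

lemma si_mul_pow_inv (i j : B) (k : ℕ) :
    s i * ((s i * s j) ^ k)⁻¹ = (s i * s j) ^ k * s i := by
  induction k with
  | zero => simp
  | succ k ih =>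
      have h1 : s i * ((s i * s j))⁻¹ = (s i * s j) * s i := by
        rw [mul_inv_rev, cs.inv_simple, cs.inv_simple, mul_assoc]
      calc s i * ((s i * s j) ^ (k + 1))⁻¹
          = (s i * ((s i * s j))⁻¹) * ((s i * s j) ^ k)⁻¹ := by
            rw [pow_succ, mul_inv_rev, mul_assoc]
        _ = (s i * s j) * (s i * ((s i * s j) ^ k)⁻¹) := by rw [h1, mul_assoc]
        _ = (s i * s j) ^ (k + 1) * s i := by rw [ih, pow_succ']; group

lemma conj_pow_si (i j : B) (k : ℕ) :
    (s i * s j) ^ k * s i * ((s i * s j) ^ k)⁻¹ = (s i * s j) ^ (2 * k) * s i := by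
  rw [mul_assoc, si_mul_pow_inv, ← mul_assoc, ← pow_add, two_mul]

lemma conj_pow_sisjsi (i j : B) (k : ℕ) :
    (s i * s j) ^ k * (s i * s j * s i) * ((s i * s j) ^ k)⁻¹
      = (s i * s j) ^ (2 * k + 1) * s i := by
  have : (s i * s j) ^ k * (s i * s j * s i) * ((s i * s j) ^ k)⁻¹
      = (s i * s j) ^ (k + 1) * (s i * ((s i * s j) ^ k)⁻¹) := by
    rw [pow_succ]; group
  rw [this, si_mul_pow_inv, ← mul_assoc, ← pow_add]
  congr 2
  omega

lemma sum_pair_ranges (F : ℕ → ZMod 2) (m : ℕ) :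
    ∑ k ∈ Finset.range m, (F (2 * k) + F (2 * k + 1)) = ∑ n ∈ Finset.range (2 * m), F n := by
  induction m with
  | zero => simp
  | succ m ih =>
      rw [Finset.sum_range_succ, ih, (by omega : 2 * (m + 1) = 2 * m + 1 + 1),
        Finset.sum_range_succ, Finset.sum_range_succ, (by omega : 2 * m + 1 = 2*m+1)]
      abel

lemma conj_eq_iff (a t x : W) : a⁻¹ * t * a = x ↔ t = a * x * a⁻¹ := by
  constructor
  · intro h; rw [← h]; group
  · intro h; rw [h]; group

set_option maxHeartbeats 1000000 in
lemma liftable : M.IsLiftable (gens cs) := by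
  intro i j
  set m := M i j with hm
  have hcm : (s i * s j) ^ m = 1 := cs.simple_mul_simple_pow i j
  ext t
  · rw [pow_fn, one_fn]
    have hfn : ∀ u : W, (gens cs i * gens cs j).fn u
        = (if u = s i then 1 else 0) + (if u = s i * s j * s i then (1 : ZMod 2) else 0) := by
      intro u
      rw [mul_fn]
      show (if u = s i then (1:ZMod 2) else 0)
          + (if (s i)⁻¹ * u * s i = s j then (1:ZMod 2) else 0) = _
      have h2 : ((s i)⁻¹ * u * s i = s j) ↔ (u = s i * s j * s i) := by
        rw [conj_eq_iff, cs.inv_simple]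
      simp only [h2]
    have hel : (gens cs i * gens cs j).el = s i * s j := rfl
    rw [hel]
    have key : ∀ k : ℕ, (gens cs i * gens cs j).fn (((s i * s j) ^ k)⁻¹ * t * (s i * s j) ^ k)
        = (if t = (s i * s j) ^ (2 * k) * s i then (1:ZMod 2) else 0)
          + (if t = (s i * s j) ^ (2 * k + 1) * s i then (1:ZMod 2) else 0) := by
      intro k
      rw [hfn]
      simp only [conj_eq_iff ((s i * s j) ^ k), conj_pow_si, conj_pow_sisjsi]
    calc ∑ k ∈ Finset.range m, (gens cs i * gens cs j).fn
            (((s i * s j) ^ k)⁻¹ * t * (s i * s j) ^ k)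
        = ∑ k ∈ Finset.range m, ((if t = (s i * s j) ^ (2 * k) * s i then (1:ZMod 2) else 0)
            + (if t = (s i * s j) ^ (2 * k + 1) * s i then (1:ZMod 2) else 0)) :=
          Finset.sum_congr rfl fun k _ => key k
      _ = ∑ n ∈ Finset.range (2 * m), (if t = (s i * s j) ^ n * s i then (1:ZMod 2) else 0) :=
          sum_pair_ranges (fun n => if t = (s i * s j) ^ n * s i then (1:ZMod 2) else 0) m
      _ = ∑ n ∈ Finset.range (m + m), (if t = (s i * s j) ^ n * s i then (1:ZMod 2) else 0) := by
          rw [two_mul]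
      _ = 0 := by
          rw [Finset.sum_range_add]
          have h2 : ∀ k ∈ Finset.range m,
              (if t = (s i * s j) ^ (m + k) * s i then (1:ZMod 2) else 0)
                = (if t = (s i * s j) ^ k * s i then (1:ZMod 2) else 0) :=
            fun k _ => by rw [pow_add, hcm, one_mul]
          rw [Finset.sum_congr rfl h2]
          exact zmod2_add_self _
  · rw [pow_el, one_el]
    exact hcm

/-- The reflection-cocycle homomorphism. -/
noncomputable def phi : W →* NN W := cs.lift ⟨gens cs, liftable cs⟩

@[simp] lemma phi_simple (i : B) : phi cs (s i) = gens cs i :=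
  cs.lift_apply_simple (liftable cs) i

/-- Second projection of the cocycle group. -/
def elHom : NN W →* W where
  toFun := NN.el
  map_one' := rfl
  map_mul' := fun _ _ => rfl

@[simp] lemma phi_el (w : W) : (phi cs w).el = w := by
  have : (elHom.comp (phi cs) : W →* W) = MonoidHom.id W := by
    apply cs.ext_simple
    intro i
    simp [elHom, phi]
    rfl
  exact congrArg (fun (f : W →* W) => f w) this

/-- `nn cs w t` : the parity of the number of times `t` occurs as a left inversion of `w`. -/
noncomputable def nn (w t : W) : ZMod 2 := (phi cs w).fn t

lemma nn_mul (a b t : W) : nn cs (a * b) t = nn cs a t + nn cs b (a⁻¹ * t * a) := by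
  unfold nn
  rw [map_mul, mul_fn, phi_el]

lemma nn_simple (i : B) (t : W) : nn cs (s i) t = if t = s i then 1 else 0 := by
  unfold nn
  rw [phi_simple]
  rfl

lemma nn_one (t : W) : nn cs 1 t = 0 := by
  unfold nn
  rw [map_one, one_fn]

end Phi


section Exchange

open scoped Classical

variable (cs : CoxeterSystem M W)

local prefix:100 "s" => cs.simple
local prefix:100 "π" => cs.wordProd
local prefix:100 "ℓ" => cs.length

lemma nn_count (ω : List B) (t : W) :
    nn cs (π ω) t = ((cs.leftInvSeq ω).count t : ZMod 2) := by
  induction ω generalizing t with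
  | nil => simp [nn_one]
  | cons i ω ih =>
      have hlis : cs.leftInvSeq (i :: ω)
          = s i :: List.map (⇑(MulAut.conj (s i))) (cs.leftInvSeq ω) := rfl
      rw [cs.wordProd_cons, nn_mul, nn_simple, hlis, List.count_cons]
      have harg : (s i)⁻¹ * t * s i = s i * t * s i := by rw [cs.inv_simple]
      have hmap : (List.map (⇑(MulAut.conj (s i))) (cs.leftInvSeq ω)).count t
          = (cs.leftInvSeq ω).count (s i * t * s i) := by
        have ht : t = (MulAut.conj (s i)) (s i * t * s i) := by
          simp only [MulAut.conj_apply, cs.inv_simple, mul_assoc,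
            cs.simple_mul_simple_cancel_left]
          rw [cs.simple_mul_simple_self, mul_one]
        nth_rewrite 1 [ht]
        rw [List.count_map_of_injective _ _ (MulAut.conj (s i)).injective]
      rw [hmap, harg, ih]
      push_cast
      rw [add_comm]
      congr 1
      have hbeq : ((s i == t) = true) ↔ (t = s i) := by rw [beq_iff_eq, eq_comm]
      simp only [hbeq]

lemma nn_refl_self {t : W} (ht : cs.IsReflection t) : nn cs t t = 1 := by
  obtain ⟨u, i, rfl⟩ := ht
  have hab : ∀ a b : ZMod 2, a + b = 0 → b = a := by decide
  have habc : ∀ a : ZMod 2, a + (1 + a) = 1 := by decide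
  have hinv : nn cs u⁻¹ (s i) = nn cs u (u * s i * u⁻¹) := by
    have h0 : nn cs (u * u⁻¹) (u * s i * u⁻¹) = 0 := by rw [mul_inv_cancel, nn_one]
    rw [nn_mul] at h0
    have harg : u⁻¹ * (u * s i * u⁻¹) * u = s i := by group
    rw [harg] at h0
    exact hab _ _ h0
  have harg1 : u⁻¹ * (u * s i * u⁻¹) * u = s i := by group
  have harg2 : (s i)⁻¹ * s i * s i = s i := by rw [inv_mul_cancel, one_mul]
  calc nn cs (u * s i * u⁻¹) (u * s i * u⁻¹)
      = nn cs (u * (s i * u⁻¹)) (u * s i * u⁻¹) := by rw [mul_assoc]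
    _ = nn cs u (u * s i * u⁻¹) + nn cs (s i * u⁻¹) (u⁻¹ * (u * s i * u⁻¹) * u) :=
        nn_mul cs u (s i * u⁻¹) _
    _ = nn cs u (u * s i * u⁻¹) + nn cs (s i * u⁻¹) (s i) := by rw [harg1]
    _ = nn cs u (u * s i * u⁻¹)
        + (nn cs (s i) (s i) + nn cs u⁻¹ ((s i)⁻¹ * s i * s i)) := by rw [nn_mul]
    _ = nn cs u (u * s i * u⁻¹) + (1 + nn cs u (u * s i * u⁻¹)) := by
        rw [harg2, hinv, nn_simple, if_pos rfl]
    _ = 1 := habc _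

lemma nn_eq_one_iff_descent {w t : W} (ht : cs.IsReflection t) :
    ℓ (t * w) < ℓ w ↔ nn cs w t = 1 := by
  have aux : ∀ v : W, nn cs v t = 1 → ℓ (t * v) < ℓ v := by
    intro v h1
    obtain ⟨ω, hred, hv⟩ := cs.exists_reduced_word' v
    rw [hv, nn_count] at h1
    have hmem : t ∈ cs.leftInvSeq ω := by
      by_contra hmem
      rw [List.count_eq_zero_of_not_mem hmem] at h1
      exact absurd h1 (by decide)
    have := cs.isLeftInversion_of_mem_leftInvSeq hred hmem
    rw [hv]
    exact this.2
  constructor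
  · intro hlt
    rcases (by decide : ∀ a : ZMod 2, a = 0 ∨ a = 1) (nn cs w t) with h0 | h1
    · exfalso
      have h1' : nn cs (t * w) t = 1 := by
        have harg : t⁻¹ * t * t = t := by rw [inv_mul_cancel, one_mul]
        rw [nn_mul, nn_refl_self cs ht, harg, h0, add_zero]
      have := aux (t * w) h1'
      rw [← mul_assoc, ht.mul_self, one_mul] at this
      omega
    · exact h1
  · exact aux w

lemma strong_exchange {t : W} (ht : cs.IsReflection t) (ω : List B)
    (hlt : ℓ (t * π ω) < ℓ (π ω)) :
    ∃ k < ω.length, t * π ω = π (ω.eraseIdx k) := by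
  have h1 : nn cs (π ω) t = 1 := (nn_eq_one_iff_descent cs ht).mp hlt
  rw [nn_count] at h1
  have hmem : t ∈ cs.leftInvSeq ω := by
    by_contra hmem
    rw [List.count_eq_zero_of_not_mem hmem] at h1
    exact absurd h1 (by decide)
  obtain ⟨k, hk, hget⟩ := List.getElem_of_mem hmem
  refine ⟨k, ?_, ?_⟩
  · rwa [cs.length_leftInvSeq] at hk
  · rw [← cs.getD_leftInvSeq_mul_wordProd ω k]
    congr 1
    rw [List.getD_eq_getElem _ _ hk]
    exact hget.symm

lemma deletion (ω : List B) : ∃ ρ, ρ.Sublist ω ∧ cs.IsReduced ρ ∧ π ρ = π ω := by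
  induction ω with
  | nil =>
      refine ⟨[], List.Sublist.refl _, ?_, rfl⟩
      simp [CoxeterSystem.IsReduced]
  | cons i ω ih =>
      obtain ⟨ρ, hsub, hred, hπ⟩ := ih
      by_cases h : ℓ (s i * π ω) < ℓ (π ω)
      · have hρ : ℓ (s i * π ρ) < ℓ (π ρ) := by rw [hπ]; exact h
        obtain ⟨k, hk, heq⟩ := strong_exchange cs (cs.isReflection_simple i) ρ hρ
        refine ⟨ρ.eraseIdx k, ?_, ?_, ?_⟩
        · exact ((ρ.eraseIdx_sublist k).trans hsub).trans (List.sublist_cons_self i ω)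
        · have hlen : (ρ.eraseIdx k).length = ρ.length - 1 := by
            rw [List.length_eraseIdx]
            simp [hk]
          have hl2 : ℓ (s i * π ω) + 1 = ℓ (π ω) := by
            rcases cs.length_simple_mul (π ω) i with h' | h' <;> omega
          have hlρ : ℓ (π ω) = ρ.length := by rw [← hπ]; exact hred
          rw [CoxeterSystem.IsReduced, ← heq, hπ, hlen]
          omega
        · rw [← heq, hπ, cs.wordProd_cons]
      · have hl : ℓ (s i * π ω) = ℓ (π ω) + 1 := by
          rcases cs.length_simple_mul (π ω) i with h' | h' <;> omega
        refine ⟨i :: ρ, hsub.cons₂ i, ?_, ?_⟩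
        · have hlρ : ℓ (π ω) = ρ.length := by rw [← hπ]; exact hred
          have hsl : ρ.length ≤ ω.length := hsub.length_le
          rw [CoxeterSystem.IsReduced, cs.wordProd_cons, hπ, hl, List.length_cons]
          omega
        · rw [cs.wordProd_cons, cs.wordProd_cons, hπ]

end Exchange

section Bruhat

open scoped Classical

variable (cs : CoxeterSystem M W)

local prefix:100 "s" => cs.simple
local prefix:100 "π" => cs.wordProd
local prefix:100 "ℓ" => cs.length

/-- `u` is a subword-product of `ω`. -/
def SubP (ω : List B) (u : W) : Prop := ∃ ω', ω'.Sublist ω ∧ π ω' = u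

/-- One step up in the Bruhat order. -/
def lt1 (x y : W) : Prop := ∃ t, cs.IsReflection t ∧ y = t * x ∧ ℓ x < ℓ y

/-- Bruhat order via reflection chains. -/
def ble : W → W → Prop := Relation.ReflTransGen (lt1 cs)

lemma SubP.of_cons {ω : List B} {i : B} {u : W} (h : SubP cs ω u) : SubP cs (i :: ω) u := by
  obtain ⟨ω', h1, h2⟩ := h
  exact ⟨ω', h1.trans (List.sublist_cons_self i ω), h2⟩

/-- Closure of subwords under left descents. -/
lemma SubP.descent {ω : List B} {t u : W} (ht : cs.IsReflection t)
    (h : SubP cs ω u) (hlt : ℓ (t * u) < ℓ u) : SubP cs ω (t * u) := by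
  obtain ⟨ω', hsub, rfl⟩ := h
  obtain ⟨ρ, hρsub, hρred, hρπ⟩ := deletion cs ω'
  have hlt' : ℓ (t * π ρ) < ℓ (π ρ) := by rw [hρπ]; exact hlt
  obtain ⟨k, hk, heq⟩ := strong_exchange cs ht ρ hlt'
  refine ⟨ρ.eraseIdx k, ((ρ.eraseIdx_sublist k).trans hρsub).trans hsub, ?_⟩
  rw [← heq, hρπ]

lemma reduced_cons {i : B} {ω : List B} (h : cs.IsReduced (i :: ω)) :
    cs.IsReduced ω ∧ ℓ (π ω) < ℓ (s i * π ω) := by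
  have h1 : ℓ (π (i :: ω)) = ω.length + 1 := h
  rw [cs.wordProd_cons] at h1
  have h2 : ℓ (π ω) ≤ ω.length := cs.length_wordProd_le ω
  rcases cs.length_simple_mul (π ω) i with h3 | h3
  · constructor
    · show ℓ (π ω) = ω.length
      omega
    · omega
  · omega

/-- The "up-star": multiply by `s i` on the left if that increases length. -/
noncomputable def ustar (i : B) (x : W) : W := if ℓ (s i * x) < ℓ x then x else s i * x

lemma ustar_of_lt {i : B} {x : W} (h : ℓ (s i * x) < ℓ x) : ustar cs i x = x := if_pos h

lemma ustar_of_gt {i : B} {x : W} (h : ℓ x < ℓ (s i * x)) : ustar cs i x = s i * x :=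
  if_neg (by omega)

/-- The key rigidity lemma, via strong exchange. -/
lemma dagger {t z : W} {i : B} (ht : cs.IsReflection t)
    (h1 : ℓ (t * z) = ℓ z + 1) (h2 : ℓ (s i * (t * z)) + 1 = ℓ (t * z))
    (h3 : ℓ (s i * z) = ℓ z + 1) : s i * z = t * z := by
  obtain ⟨σ, hσred, hσ⟩ := cs.exists_reduced_word' (s i * (t * z))
  have hiσ : π (i :: σ) = t * z := by
    rw [cs.wordProd_cons, ← hσ, ← mul_assoc, cs.simple_mul_simple_self, one_mul]
  have hiσred : cs.IsReduced (i :: σ) := by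
    show ℓ (π (i :: σ)) = σ.length + 1
    have : ℓ (s i * (t * z)) = σ.length := by rw [hσ]; exact hσred
    rw [hiσ]
    omega
  have hltz : ℓ (t * π (i :: σ)) < ℓ (π (i :: σ)) := by
    rw [hiσ, ← mul_assoc, ht.mul_self, one_mul]
    omega
  obtain ⟨k, hk, heq⟩ := strong_exchange cs ht (i :: σ) hltz
  rw [hiσ, ← mul_assoc, ht.mul_self, one_mul] at heq
  match k, heq with
  | 0, heq =>
      have hz : z = s i * (t * z) := by
        have := heq
        rwa [List.eraseIdx_cons_zero, ← hσ] at this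
      calc s i * z = s i * (s i * (t * z)) := by rw [← hz]
        _ = t * z := by rw [← mul_assoc, cs.simple_mul_simple_self, one_mul]
  | (j+1), heq =>
      exfalso
      have hj : j < σ.length := by simpa using hk
      have hz : z = s i * π (σ.eraseIdx j) := by
        have := heq
        rwa [List.eraseIdx_cons_succ, cs.wordProd_cons] at this
      have hlen : ℓ (s i * z) ≤ σ.length - 1 := by
        have hzz : s i * z = π (σ.eraseIdx j) := by
          rw [hz, ← mul_assoc, cs.simple_mul_simple_self, one_mul]
        have hh := cs.length_wordProd_le (σ.eraseIdx j)
        rw [← hzz] at hh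
        rw [List.length_eraseIdx] at hh
        simpa [hj] using hh
      have hσlen : σ.length = ℓ z := by
        have hh : ℓ (s i * (t * z)) = σ.length := by rw [hσ]; exact hσred
        omega
      omega

/-- Monotonicity of the up-star along single Bruhat steps. -/
lemma ustar_mono_step {z w : W} (i : B) (h : lt1 cs z w) :
    ble cs (ustar cs i z) (ustar cs i w) := by
  obtain ⟨t, ht, rfl, hlt⟩ := h
  rcases cs.length_simple_mul z i with hz | hz
  · -- s i * z longer
    rcases cs.length_simple_mul (t * z) i with hw | hw
    · -- s i * w longer : single step with reflection s i * t * s i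
      rw [ustar_of_gt cs (by omega), ustar_of_gt cs (by omega)]
      refine Relation.ReflTransGen.single ⟨s i * t * (s i)⁻¹, ht.conj (s i), ?_, by omega⟩
      group
    · -- s i * w shorter
      rw [ustar_of_gt cs (by omega), ustar_of_lt cs (by omega)]
      rcases Nat.lt_trichotomy (ℓ (s i * (t * z))) (ℓ (s i * z)) with hc | hc | hc
      · -- forces the dagger configuration
        have h1 : ℓ (t * z) = ℓ z + 1 := by omega
        have h3 : ℓ (s i * z) = ℓ z + 1 := hz
        have hd := dagger cs ht h1 (by omega) h3
        rw [hd]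
        exact Relation.ReflTransGen.refl
      · exfalso
        have hne : ℓ ((s i * t * (s i)⁻¹) * (s i * z)) ≠ ℓ (s i * z) :=
          (ht.conj (s i)).length_mul_right_ne (s i * z)
        have harg : (s i * t * (s i)⁻¹) * (s i * z) = s i * (t * z) := by group
        rw [harg] at hne
        omega
      · -- s i * z —(conj t)→ s i * w —(s i)→ w : two steps
        have step1 : lt1 cs (s i * z) (s i * (t * z)) :=
          ⟨s i * t * (s i)⁻¹, ht.conj (s i), by group, by omega⟩
        have step2 : lt1 cs (s i * (t * z)) (t * z) :=
          ⟨s i, cs.isReflection_simple i,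
            by rw [← mul_assoc, cs.simple_mul_simple_self, one_mul], by omega⟩
        exact Relation.ReflTransGen.head step1 (Relation.ReflTransGen.single step2)
  · -- s i * z shorter : ustar z = z
    rw [ustar_of_lt cs (by omega)]
    rcases cs.length_simple_mul (t * z) i with hw | hw
    · rw [ustar_of_gt cs (by omega)]
      have step1 : lt1 cs z (t * z) := ⟨t, ht, rfl, hlt⟩
      have step2 : lt1 cs (t * z) (s i * (t * z)) :=
        ⟨s i, cs.isReflection_simple i, rfl, by omega⟩
      exact Relation.ReflTransGen.head step1 (Relation.ReflTransGen.single step2)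
    · rw [ustar_of_lt cs (by omega)]
      exact Relation.ReflTransGen.single ⟨t, ht, rfl, hlt⟩

lemma ustar_mono {z w : W} (i : B) (h : ble cs z w) :
    ble cs (ustar cs i z) (ustar cs i w) := by
  induction h with
  | refl => exact Relation.ReflTransGen.refl
  | tail _ hstep ih => exact ih.trans (ustar_mono_step cs i hstep)

/-- Subword products are below in the chain order. -/
lemma SubP.to_ble {ω : List B} (hred : cs.IsReduced ω) {u : W} (h : SubP cs ω u) :
    ble cs u (π ω) := by
  induction ω generalizing u with
  | nil =>
      obtain ⟨ω', hsub, rfl⟩ := h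
      rw [List.sublist_nil.mp hsub]
      exact Relation.ReflTransGen.refl
  | cons i ω ih =>
      obtain ⟨hredω, hasc⟩ := reduced_cons cs hred
      obtain ⟨ω', hsub, rfl⟩ := h
      have hπcons : π (i :: ω) = s i * π ω := cs.wordProd_cons i ω
      rcases List.sublist_cons_iff.mp hsub with hsub' | ⟨τ', rfl, hτ'⟩
      · have h1 : ble cs (π ω') (π ω) := ih hredω ⟨ω', hsub', rfl⟩
        refine h1.trans (Relation.ReflTransGen.single ?_)
        exact ⟨s i, cs.isReflection_simple i, hπcons, by rw [hπcons]; omega⟩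
      · have h1 : ble cs (π τ') (π ω) := ih hredω ⟨τ', hτ', rfl⟩
        have h2 := ustar_mono cs i h1
        rw [ustar_of_gt cs hasc] at h2
        rw [← hπcons] at h2
        rw [cs.wordProd_cons]
        rcases cs.length_simple_mul (π τ') i with hc | hc
        · rwa [ustar_of_gt cs (by omega)] at h2
        · rw [ustar_of_lt cs (by omega)] at h2
          refine Relation.ReflTransGen.head ?_ h2
          refine ⟨s i, cs.isReflection_simple i, ?_, by omega⟩
          rw [← mul_assoc, cs.simple_mul_simple_self, one_mul]

/-- Chain order elements are subwords of every reduced word. -/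
lemma ble_to_Sub {ω : List B} (hred : cs.IsReduced ω) {u : W} (h : ble cs u (π ω)) :
    SubP cs ω u := by
  induction h using Relation.ReflTransGen.head_induction_on with
  | refl => exact ⟨ω, List.Sublist.refl ω, rfl⟩
  | head hstep _ ih =>
      rename_i x y _
      obtain ⟨t, ht, rfl, hlt⟩ := hstep
      have hx : x = t * (t * x) := by rw [← mul_assoc, ht.mul_self, one_mul]
      have := SubP.descent cs ht ih (by rw [← hx]; exact hlt)
      rwa [← hx] at this

end Bruhat

section Dem

open scoped Classical

variable (cs : CoxeterSystem M W)

local prefix:100 "s" => cs.simple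
local prefix:100 "π" => cs.wordProd
local prefix:100 "ℓ" => cs.length

/-- Set of subword-products (defined recursively via Demazure-type recursion). -/
noncomputable def DD : List B → Finset W
  | [] => {1}
  | i :: τ =>
      ((DD τ).filter (fun x => ℓ x < ℓ (s i * x)))
        ∪ ((DD τ).filter (fun x => ℓ x < ℓ (s i * x))).image (fun x => s i * x)

lemma mem_DD_of_Sub : ∀ {ω : List B} {u : W}, u ∈ DD cs ω → SubP cs ω u := by
  intro ω
  induction ω with
  | nil =>
      intro u hu
      rw [DD, Finset.mem_singleton] at hu
      exact ⟨[], List.Sublist.refl _, by rw [hu, cs.wordProd_nil]⟩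
  | cons i τ ih =>
      intro u hu
      rw [DD, Finset.mem_union] at hu
      rcases hu with hu | hu
      · exact SubP.of_cons cs (ih (Finset.mem_filter.mp hu).1)
      · obtain ⟨x, hx, rfl⟩ := Finset.mem_image.mp hu
        obtain ⟨τ', hsub, rfl⟩ := ih (Finset.mem_filter.mp hx).1
        exact ⟨i :: τ', hsub.cons₂ i, (cs.wordProd_cons i τ').symm⟩

lemma length_simple_mul_dichotomy (x : W) (i : B) :
    ℓ (s i * x) = ℓ x + 1 ∨ ℓ (s i * x) + 1 = ℓ x := cs.length_simple_mul x i

lemma Sub_mem_DD : ∀ {ω : List B}, cs.IsReduced ω → ∀ {u : W}, SubP cs ω u → u ∈ DD cs ω := by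
  intro ω
  induction ω with
  | nil =>
      intro _ u hu
      obtain ⟨ω', hsub, rfl⟩ := hu
      rw [List.sublist_nil.mp hsub, cs.wordProd_nil, DD]
      exact Finset.mem_singleton_self 1
  | cons i τ ih =>
      intro hred u hu
      obtain ⟨hredτ, _⟩ := reduced_cons cs hred
      rw [DD, Finset.mem_union]
      obtain ⟨ω', hsub, rfl⟩ := hu
      rcases List.sublist_cons_iff.mp hsub with hsub' | ⟨τ', rfl, hτ'⟩
      · -- ω' is a subword of τ
        set u := π ω' with hu
        have humem : u ∈ DD cs τ := ih hredτ ⟨ω', hsub', rfl⟩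
        rcases length_simple_mul_dichotomy cs u i with hc | hc
        · exact Or.inl (Finset.mem_filter.mpr ⟨humem, by omega⟩)
        · right
          have hdesc : ℓ (s i * u) < ℓ u := by omega
          have h2 : s i * u ∈ DD cs τ :=
            ih hredτ (SubP.descent cs (cs.isReflection_simple i) ⟨ω', hsub', rfl⟩ hdesc)
          refine Finset.mem_image.mpr ⟨s i * u, Finset.mem_filter.mpr ⟨h2, ?_⟩, ?_⟩
          · rw [← mul_assoc, cs.simple_mul_simple_self, one_mul]
            omega
          · rw [← mul_assoc, cs.simple_mul_simple_self, one_mul]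
      · -- ω' = i :: τ'
        rw [cs.wordProd_cons]
        set x := π τ' with hx
        have hxmem : x ∈ DD cs τ := ih hredτ ⟨τ', hτ', rfl⟩
        rcases length_simple_mul_dichotomy cs x i with hc | hc
        · exact Or.inr (Finset.mem_image.mpr
            ⟨x, Finset.mem_filter.mpr ⟨hxmem, by omega⟩, rfl⟩)
        · left
          have hdesc : ℓ (s i * x) < ℓ x := by omega
          have h2 : s i * x ∈ DD cs τ :=
            ih hredτ (SubP.descent cs (cs.isReflection_simple i) ⟨τ', hτ', rfl⟩ hdesc)
          refine Finset.mem_filter.mpr ⟨h2, ?_⟩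
          rw [← mul_assoc, cs.simple_mul_simple_self, one_mul]
          omega

/-- Demazure product along a word. -/
noncomputable def dem (ω : List B) : W := ω.foldr (fun i x => ustar cs i x) 1

variable {E : Type*} [AddCommGroup E]

lemma list_sum_neg {X : Type*} (l : List X) (h : X → E) :
    (l.map fun x => -(h x)).sum = -((l.map h).sum) := by
  induction l with
  | nil => simp
  | cons a l ih =>
      simp only [List.map_cons, List.sum_cons, ih]
      abel

lemma sum_sublists (ω : List B) (f : W → E) :
    ((ω.sublists').map (fun ω' => ((-1:ℤ) ^ ω'.length) • f (dem cs ω'))).sum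
      = ∑ u ∈ DD cs ω, ((-1:ℤ) ^ (ℓ u)) • f u := by
  induction ω generalizing f with
  | nil =>
      rw [List.sublists'_nil, DD]
      simp [dem, Finset.sum_singleton, cs.length_one]
  | cons i τ ih =>
      rw [List.sublists'_cons, List.map_append, List.sum_append, List.map_map]
      have hcomp : ((fun ω' => ((-1:ℤ) ^ ω'.length) • f (dem cs ω')) ∘ (List.cons i))
          = fun τ' => -(((-1:ℤ) ^ τ'.length) • (fun u => f (ustar cs i u)) (dem cs τ')) := by
        funext τ'
        show ((-1:ℤ) ^ (τ'.length + 1)) • f (dem cs (i :: τ')) = _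
        have hd : dem cs (i :: τ') = ustar cs i (dem cs τ') := rfl
        rw [hd, pow_succ', neg_one_mul, neg_smul]
      rw [hcomp, list_sum_neg, ih f, ih (fun u => f (ustar cs i u))]
      set A := (DD cs τ).filter (fun x => ℓ x < ℓ (s i * x)) with hA
      have hDD : DD cs (i :: τ) = A ∪ A.image (fun x => s i * x) := rfl
      rw [hDD, ← sub_eq_add_neg, ← Finset.sum_sub_distrib]
      have hdisj : Disjoint A (A.image (fun x => s i * x)) := by
        rw [Finset.disjoint_left]
        rintro a ha hb
        obtain ⟨x, hx, rfl⟩ := Finset.mem_image.mp hb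
        have h1 := (Finset.mem_filter.mp ha).2
        have h2 := (Finset.mem_filter.mp hx).2
        rw [← mul_assoc, cs.simple_mul_simple_self, one_mul] at h1
        omega
      rw [Finset.sum_union hdisj]
      rw [Finset.sum_image (fun x _ y _ h => mul_left_cancel h)]
      rw [← Finset.sum_filter_add_sum_filter_not (DD cs τ) (fun x => ℓ x < ℓ (s i * x))]
      have hzero : ∑ u ∈ (DD cs τ).filter (fun x => ¬ ℓ x < ℓ (s i * x)),
          (((-1:ℤ) ^ (ℓ u)) • f u - ((-1:ℤ) ^ (ℓ u)) • f (ustar cs i u)) = 0 := by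
        refine Finset.sum_eq_zero fun u hu => ?_
        have h1 := (Finset.mem_filter.mp hu).2
        rcases length_simple_mul_dichotomy cs u i with hc | hc
        · omega
        · rw [ustar_of_lt cs (by omega), sub_self]
      rw [hzero, add_zero, ← hA]
      rw [← Finset.sum_add_distrib]
      refine Finset.sum_congr rfl fun u hu => ?_
      have h1 := (Finset.mem_filter.mp hu).2
      have h2 : ℓ (s i * u) = ℓ u + 1 := by
        rcases length_simple_mul_dichotomy cs u i with hc | hc <;> omega
      rw [ustar_of_gt cs h1, h2, pow_succ', neg_one_mul, neg_smul]
      abel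

end Dem

section Op

open scoped Classical

variable (cs : CoxeterSystem M W)

local prefix:100 "s" => cs.simple
local prefix:100 "π" => cs.wordProd
local prefix:100 "ℓ" => cs.length

lemma projSimple_idem (j : B) (w : W) :
    cs.projSimple j (cs.projSimple j w) = cs.projSimple j w := by
  unfold CoxeterSystem.projSimple
  by_cases h : ℓ (w * s j) < ℓ w
  · rw [if_pos h]
    have hc : w * s j * s j = w := cs.simple_mul_simple_cancel_right j
    rw [hc]
    rw [if_neg (by omega)]
  · rw [if_neg h, if_neg h]

lemma lmap_comp (g f : W → W) :
    (Finsupp.lmapDomain ℤ ℤ (g ∘ f) : Module.End ℤ (W →₀ ℤ))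
      = (Finsupp.lmapDomain ℤ ℤ g) * (Finsupp.lmapDomain ℤ ℤ f) := by
  refine LinearMap.ext fun x => ?_
  show Finsupp.mapDomain (g ∘ f) x = Finsupp.mapDomain g (Finsupp.mapDomain f x)
  exact Finsupp.mapDomain_comp

lemma projS_idem (j : B) : cs.projS j * cs.projS j = cs.projS j := by
  rw [CoxeterSystem.projS, ← lmap_comp]
  congr 1
  funext w
  exact projSimple_idem cs j w

lemma barP_idem (j : B) :
    ((1 : Module.End ℤ (W →₀ ℤ)) - cs.projS j) * (1 - cs.projS j) = 1 - cs.projS j := by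
  rw [mul_sub, sub_mul, sub_mul, one_mul, mul_one, projS_idem]
  abel

lemma projBarWord_eq_dem (PbarU : W → Module.End ℤ (W →₀ ℤ))
    (hPbarU : ∀ (u : W) (ω : List B), cs.IsReduced ω → cs.wordProd ω = u →
      PbarU u = cs.projBarWord ω) :
    ∀ ω : List B, cs.projBarWord ω = PbarU (dem cs ω) := by
  intro ω
  induction ω with
  | nil =>
      have h := hPbarU 1 [] (by simp [CoxeterSystem.IsReduced]) cs.wordProd_nil
      exact h.symm
  | cons i τ ih =>
      obtain ⟨σ, hσred, hσeq⟩ := cs.exists_reduced_word' (dem cs τ)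
      have hP : PbarU (dem cs τ) = cs.projBarWord σ := hPbarU _ σ hσred hσeq.symm
      have hcons : cs.projBarWord (i :: τ) = (1 - cs.projS i) * cs.projBarWord τ := rfl
      have hdem : dem cs (i :: τ) = ustar cs i (dem cs τ) := rfl
      rcases length_simple_mul_dichotomy cs (dem cs τ) i with hc | hc
      · have hlσ : ℓ (dem cs τ) = σ.length := by rw [hσeq]; exact hσred
        have hred2 : cs.IsReduced (i :: σ) := by
          show ℓ (π (i :: σ)) = σ.length + 1
          rw [cs.wordProd_cons, ← hσeq]
          omega
        have hπ2 : π (i :: σ) = s i * dem cs τ := by rw [cs.wordProd_cons, ← hσeq]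
        have hP2 := hPbarU (s i * dem cs τ) (i :: σ) hred2 hπ2
        rw [hcons, ih, hP, hdem, ustar_of_gt cs (by omega), hP2]
        rfl
      · have hdesc : ℓ (s i * dem cs τ) < ℓ (dem cs τ) := by omega
        obtain ⟨σ', hσ'red, hσ'eq⟩ := cs.exists_reduced_word' (s i * dem cs τ)
        have hlσ' : ℓ (s i * dem cs τ) = σ'.length := by rw [hσ'eq]; exact hσ'red
        have hπ2 : π (i :: σ') = dem cs τ := by
          rw [cs.wordProd_cons, ← hσ'eq, ← mul_assoc, cs.simple_mul_simple_self, one_mul]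
        have hred2 : cs.IsReduced (i :: σ') := by
          show ℓ (π (i :: σ')) = σ'.length + 1
          rw [hπ2]
          omega
        have hP2 : PbarU (dem cs τ) = cs.projBarWord (i :: σ') := hPbarU _ _ hred2 hπ2
        rw [hcons, ih, hP2, hdem, ustar_of_lt cs hdesc, hP2]
        show (1 - cs.projS i) * ((1 - cs.projS i) * cs.projBarWord σ')
            = (1 - cs.projS i) * cs.projBarWord σ'
        rw [← mul_assoc, barP_idem]

lemma list_sum_mul_left {X R : Type*} [Ring R] (l : List X) (a : R) (g : X → R) :
    (l.map fun x => a * g x).sum = a * (l.map g).sum := by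
  induction l with
  | nil => simp
  | cons b l ih => simp [ih, mul_add]

lemma lmap_projWord_expand : ∀ ω : List B,
    (Finsupp.lmapDomain ℤ ℤ (cs.projWord ω) : Module.End ℤ (W →₀ ℤ))
      = ((ω.sublists').map (fun ω' => ((-1:ℤ) ^ ω'.length) • cs.projBarWord ω')).sum := by
  intro ω
  induction ω with
  | nil =>
      rw [List.sublists'_nil]
      show Finsupp.lmapDomain ℤ ℤ id = _
      simp only [List.map_cons, List.map_nil, List.sum_cons, List.sum_nil, add_zero,
        List.length_nil, pow_zero, one_smul]
      refine LinearMap.ext fun x => ?_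
      show Finsupp.mapDomain id x = cs.projBarWord [] x
      rw [Finsupp.mapDomain_id]
      rfl
  | cons i τ ih =>
      have h1 : cs.projWord (i :: τ) = cs.projSimple i ∘ cs.projWord τ := rfl
      rw [h1, lmap_comp]
      rw [List.sublists'_cons, List.map_append, List.sum_append, List.map_map]
      have hcomp : ((fun ω' => ((-1:ℤ) ^ ω'.length) • cs.projBarWord ω') ∘ (List.cons i))
          = fun τ' => -(((1 : Module.End ℤ (W →₀ ℤ)) - cs.projS i)
              * (((-1:ℤ) ^ τ'.length) • cs.projBarWord τ')) := by
        funext τ'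
        show ((-1:ℤ) ^ (τ'.length + 1)) • cs.projBarWord (i :: τ') = _
        have hb : cs.projBarWord (i :: τ') = (1 - cs.projS i) * cs.projBarWord τ' := rfl
        rw [hb, pow_succ', neg_one_mul, neg_smul, mul_smul_comm]
      rw [hcomp]
      have h2 : (τ.sublists'.map fun τ' => -(((1 : Module.End ℤ (W →₀ ℤ)) - cs.projS i)
              * (((-1:ℤ) ^ τ'.length) • cs.projBarWord τ'))).sum
          = -(((1 : Module.End ℤ (W →₀ ℤ)) - cs.projS i)
              * (τ.sublists'.map fun τ' => ((-1:ℤ) ^ τ'.length) • cs.projBarWord τ').sum) := by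
        rw [list_sum_neg, list_sum_mul_left]
      rw [h2, ← ih]
      set L := (Finsupp.lmapDomain ℤ ℤ (cs.projWord τ) : Module.End ℤ (W →₀ ℤ)) with hL
      have h3 : ((1 : Module.End ℤ (W →₀ ℤ)) - cs.projS i) * L = L - cs.projS i * L := by
        rw [sub_mul, one_mul]
      rw [h3]
      abel

end Op

end BruhatAux

theorem stmt_16 (cs : CoxeterSystem M W) (v : W)
    (PU PbarU : W → Module.End ℤ (W →₀ ℤ))
    (hPU : ∀ (u : W) (ω : List B), cs.IsReduced ω → cs.wordProd ω = u →
      PU u = Finsupp.lmapDomain ℤ ℤ (cs.projWord ω))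
    (hPbarU : ∀ (u : W) (ω : List B), cs.IsReduced ω → cs.wordProd ω = u →
      PbarU u = cs.projBarWord ω)
    (F : Finset W) (hF : ∀ u : W, u ∈ F ↔ cs.bruhatLE u v) :
    PU v = ∑ u ∈ F, ((-1 : ℤ) ^ cs.length u) • PbarU u := by
  classical
  obtain ⟨ω₀, hred, hπ⟩ := cs.exists_reduced_word' v
  have h1 : PU v = Finsupp.lmapDomain ℤ ℤ (cs.projWord ω₀) := hPU v ω₀ hred hπ.symm
  have h2 := BruhatAux.lmap_projWord_expand cs ω₀
  have h3 := BruhatAux.projBarWord_eq_dem cs PbarU hPbarU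
  have h4 : ((ω₀.sublists').map (fun ω' => ((-1:ℤ) ^ ω'.length) • cs.projBarWord ω')).sum
      = ((ω₀.sublists').map
          (fun ω' => ((-1:ℤ) ^ ω'.length) • PbarU (BruhatAux.dem cs ω'))).sum := by
    congr 1
    exact List.map_congr_left fun ω' _ => by rw [h3]
  have h5 := BruhatAux.sum_sublists cs ω₀ PbarU
  have hFeq : F = BruhatAux.DD cs ω₀ := by
    ext u
    rw [hF u]
    constructor
    · intro h
      obtain ⟨ρ, hρred, hρπ, ρ', hsub', hπ'⟩ := h
      have hble : BruhatAux.ble cs u v := by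
        have hS : BruhatAux.SubP cs ρ u := ⟨ρ', hsub', hπ'⟩
        have := BruhatAux.SubP.to_ble cs hρred hS
        rwa [hρπ] at this
      rw [hπ] at hble
      exact BruhatAux.Sub_mem_DD cs hred (BruhatAux.ble_to_Sub cs hred hble)
    · intro h
      obtain ⟨ω', hs, hp⟩ := BruhatAux.mem_DD_of_Sub cs h
      exact ⟨ω₀, hred, hπ.symm, ω', hs, hp⟩
  rw [hFeq]
  calc PU v = _ := h1
    _ = _ := h2
    _ = _ := h4
    _ = _ := h5
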